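/- Let H be a real Hilbert space, f : H → ℝ strongly quasiconvex with value γ > 0 with minimizer x*, let c > 0 and (c_k) a sequence of reals with c_k ≥ c for all k, and let (x^k) be a sequence in H with x^{k+1} ∈ Prox_{c_k f}(x^k) for all k ∈ ℕ. Let b ≥ ‖x^0 − x*‖², set λ₀ = (1/2)·γc/(1 + γc), and define φ(ε) = ⌈4b/(ε²((1−λ₀)γc − λ₀)²)⌉ + 1 for ε > 0. Then for every ε > 0 and every k ≥ φ(√(2cε)) + 1: f(x^k) − f(x*) < ε. -/

import Mathlib

set_option maxHeartbeats 2000000 in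
/-- Explicit rate of convergence of the function values along the
proximal point algorithm towards the minimum of a strongly quasiconvex
function. -/
theorem ppa_rate_of_convergence_values
    {H : Type*} [NormedAddCommGroup H] [InnerProductSpace ℝ H] [CompleteSpace H]
    (f : H → ℝ) (γ : ℝ) (hγ : 0 < γ)
    (hf : ∀ x y : H, ∀ t ∈ Set.Icc (0 : ℝ) 1,
      f ((1 - t) • x + t • y) ≤ max (f x) (f y) - t * (1 - t) * (γ / 2) * ‖x - y‖ ^ 2)
    (xs : H) (hxs : ∀ y : H, f xs ≤ f y)
    (c : ℝ) (hc : 0 < c) (ck : ℕ → ℝ) (hck : ∀ k, c ≤ ck k)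
    (x : ℕ → H)
    (hx : ∀ k : ℕ, ∀ y : H,
      f (x (k + 1)) + (1 / (2 * ck k)) * ‖x (k + 1) - x k‖ ^ 2
        ≤ f y + (1 / (2 * ck k)) * ‖y - x k‖ ^ 2)
    (b : ℝ) (hb : ‖x 0 - xs‖ ^ 2 ≤ b)
    (l0 : ℝ) (hl0 : l0 = (1 / 2) * (γ * c / (1 + γ * c)))
    (φ : ℝ → ℕ)
    (hφ : ∀ ε : ℝ, φ ε = ⌈4 * b / (ε ^ 2 * ((1 - l0) * (γ * c) - l0) ^ 2)⌉₊ + 1) :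
    ∀ ε > (0 : ℝ), ∀ k : ℕ, φ (Real.sqrt (2 * c * ε)) + 1 ≤ k →
      f (x k) - f xs < ε := by
  intro ε hε k hk
  have hgc : 0 < γ * c := mul_pos hγ hc
  have h1gc : (0:ℝ) < 1 + γ * c := by linarith
  have h1gc' : (1:ℝ) + γ * c ≠ 0 := ne_of_gt h1gc
  set lam : ℝ := γ * c / (2 * (1 + γ * c)) with hlam
  have hlam0 : 0 < lam := by positivity
  have hlam1 : lam < 1 := by
    rw [hlam, div_lt_one (by linarith)]
    linarith
  have hlameq : lam * (1 + γ * c) = γ * c / 2 := by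
    rw [hlam]
    field_simp
  -- the key contraction step
  have step : ∀ j : ℕ, (1 + γ * c / 2) * ‖x (j + 1) - xs‖ ^ 2 ≤ ‖x j - xs‖ ^ 2 := by
    intro j
    have hd : 0 < ck j := lt_of_lt_of_le hc (hck j)
    have h1 := hx j ((1 - lam) • x (j + 1) + lam • xs)
    have h2 := hf (x (j + 1)) xs lam ⟨hlam0.le, hlam1.le⟩
    rw [max_eq_left (hxs (x (j + 1)))] at h2
    have hvec : (1 - lam) • x (j + 1) + lam • xs - x j
        = (x (j + 1) - x j) + lam • (xs - x (j + 1)) := by module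
    have hexp : ‖(1 - lam) • x (j + 1) + lam • xs - x j‖ ^ 2
        = ‖x (j + 1) - x j‖ ^ 2
          + 2 * (lam * (inner ℝ (x (j + 1) - x j) (xs - x (j + 1)) : ℝ))
          + lam ^ 2 * ‖x (j + 1) - xs‖ ^ 2 := by
      rw [hvec, norm_add_sq_real, real_inner_smul_right, norm_smul,
        Real.norm_eq_abs, abs_of_pos hlam0, norm_sub_rev xs]
      ring
    have hpolar : 2 * (inner ℝ (x (j + 1) - x j) (xs - x (j + 1)) : ℝ)
        = ‖x j - xs‖ ^ 2 - ‖x (j + 1) - x j‖ ^ 2 - ‖x (j + 1) - xs‖ ^ 2 := by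
      have h := norm_add_sq_real (x j - x (j + 1)) (x (j + 1) - xs)
      rw [show x j - x (j + 1) + (x (j + 1) - xs) = x j - xs by abel] at h
      rw [show x j - x (j + 1) = -(x (j + 1) - x j) by abel,
        show x (j + 1) - xs = -(xs - x (j + 1)) by abel, inner_neg_neg,
        norm_neg, norm_neg] at h
      rw [norm_sub_rev xs] at h
      linarith
    have key1 : lam * (1 - lam) * (γ / 2) * ‖x (j + 1) - xs‖ ^ 2
        ≤ (1 / (2 * ck j)) * (2 * (lam * (inner ℝ (x (j + 1) - x j) (xs - x (j + 1)) : ℝ))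
            + lam ^ 2 * ‖x (j + 1) - xs‖ ^ 2) := by
      rw [hexp] at h1
      linarith
    have key3 : lam * ((1 - lam) * γ * ck j * ‖x (j + 1) - xs‖ ^ 2)
        ≤ lam * (2 * (inner ℝ (x (j + 1) - x j) (xs - x (j + 1)) : ℝ)
            + lam * ‖x (j + 1) - xs‖ ^ 2) := by
      have h4 := mul_le_mul_of_nonneg_left key1 (by linarith : (0:ℝ) ≤ 2 * ck j)
      have h5 : (2 * ck j) * ((1 / (2 * ck j))
          * (2 * (lam * (inner ℝ (x (j + 1) - x j) (xs - x (j + 1)) : ℝ))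
            + lam ^ 2 * ‖x (j + 1) - xs‖ ^ 2))
          = 2 * (lam * (inner ℝ (x (j + 1) - x j) (xs - x (j + 1)) : ℝ))
            + lam ^ 2 * ‖x (j + 1) - xs‖ ^ 2 := by
        field_simp
      linarith [h4, h5]
    have key4 := le_of_mul_le_mul_left key3 hlam0
    have hP : 0 ≤ (1 - lam) * γ * (ck j - c) * ‖x (j + 1) - xs‖ ^ 2 :=
      mul_nonneg (mul_nonneg (mul_nonneg (by linarith) hγ.le)
        (by linarith [hck j])) (sq_nonneg _)
    have hidN : (lam * (1 + γ * c)) * ‖x (j + 1) - xs‖ ^ 2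
        = (γ * c / 2) * ‖x (j + 1) - xs‖ ^ 2 := by rw [hlameq]
    linarith [key4, hP, hidN, hpolar, sq_nonneg ‖x (j + 1) - x j‖]
  -- geometric decay of the iterates
  have decay : ∀ n : ℕ, (1 + γ * c / 2) ^ n * ‖x n - xs‖ ^ 2 ≤ b := by
    intro n
    induction n with
    | zero => simpa using hb
    | succ n ih =>
      have h1 := step n
      have hpow : (0:ℝ) ≤ (1 + γ * c / 2) ^ n := by positivity
      calc (1 + γ * c / 2) ^ (n + 1) * ‖x (n + 1) - xs‖ ^ 2
          = (1 + γ * c / 2) ^ n * ((1 + γ * c / 2) * ‖x (n + 1) - xs‖ ^ 2) := by ring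
        _ ≤ (1 + γ * c / 2) ^ n * ‖x n - xs‖ ^ 2 := mul_le_mul_of_nonneg_left h1 hpow
        _ ≤ b := ih
  -- arithmetic setup
  set δ := Real.sqrt (2 * c * ε) with hδ
  have hδ2 : δ ^ 2 = 2 * c * ε := Real.sq_sqrt (by positivity)
  have hD : (1 - l0) * (γ * c) - l0 = γ * c / 2 := by
    rw [hl0]
    field_simp
    ring
  set m := ⌈4 * b / (δ ^ 2 * (γ * c / 2) ^ 2)⌉₊ with hmdef
  have hφδ : φ δ = m + 1 := by rw [hφ, hD]
  rw [hφδ] at hk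
  obtain ⟨n, rfl⟩ : ∃ n, k = n + 1 := ⟨k - 1, by omega⟩
  have hnm : m + 1 ≤ n := by omega
  have hb0 : 0 ≤ b := le_trans (sq_nonneg _) hb
  have hmge : 4 * b / (δ ^ 2 * (γ * c / 2) ^ 2) ≤ (m : ℝ) := Nat.le_ceil _
  have hE : 4 * b / (δ ^ 2 * (γ * c / 2) ^ 2) * (2 * c * ε * (γ * c / 2) ^ 2) = 4 * b := by
    rw [hδ2]
    field_simp
  have h2cε : (0:ℝ) < 2 * c * ε := by positivity
  have hber := one_add_mul_le_pow (show (-2:ℝ) ≤ γ * c / 2 by linarith) m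
  have hmono : (1 + γ * c / 2) ^ (m + 1) ≤ (1 + γ * c / 2) ^ n :=
    pow_le_pow_right₀ (by linarith) hnm
  have hstep2 : (1 + (m:ℝ) * (γ * c / 2)) * (1 + γ * c / 2) ≤ (1 + γ * c / 2) ^ (m + 1) := by
    rw [pow_succ]
    exact mul_le_mul_of_nonneg_right hber (by linarith)
  have hkey : b < 2 * c * ε * (1 + γ * c / 2) ^ n := by
    have hA := mul_le_mul_of_nonneg_left (hstep2.trans hmono) h2cε.le
    have hB := mul_le_mul_of_nonneg_right hmge
      (show (0:ℝ) ≤ 2 * c * ε * (γ * c / 2) ^ 2 by positivity)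
    rw [hE] at hB
    nlinarith [hA, hB, hb0, h2cε,
      mul_nonneg (mul_nonneg h2cε.le (Nat.cast_nonneg m : (0:ℝ) ≤ (m:ℝ))) hgc.le,
      mul_nonneg h2cε.le hgc.le]
  have hpow0 : (0:ℝ) < (1 + γ * c / 2) ^ n := by positivity
  have hAn : ‖x n - xs‖ ^ 2 < 2 * c * ε := by
    have h7 : (1 + γ * c / 2) ^ n * ‖x n - xs‖ ^ 2 < (1 + γ * c / 2) ^ n * (2 * c * ε) := by
      calc (1 + γ * c / 2) ^ n * ‖x n - xs‖ ^ 2 ≤ b := decay n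
        _ < 2 * c * ε * (1 + γ * c / 2) ^ n := hkey
        _ = (1 + γ * c / 2) ^ n * (2 * c * ε) := by ring
    exact lt_of_mul_lt_mul_left h7 hpow0.le
  -- final step: one more prox inequality
  have hdn : 0 < ck n := lt_of_lt_of_le hc (hck n)
  have h1 := hx n xs
  rw [norm_sub_rev xs (x n)] at h1
  have h2 : f (x (n + 1)) ≤ f xs + 1 / (2 * ck n) * ‖x n - xs‖ ^ 2 := by
    have h3 : 0 ≤ 1 / (2 * ck n) * ‖x (n + 1) - x n‖ ^ 2 := by positivity
    linarith
  have h4 : 1 / (2 * ck n) * ‖x n - xs‖ ^ 2 ≤ 1 / (2 * c) * ‖x n - xs‖ ^ 2 := by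
    apply mul_le_mul_of_nonneg_right _ (sq_nonneg _)
    exact one_div_le_one_div_of_le (by linarith) (by linarith [hck n])
  have h5 : 1 / (2 * c) * ‖x n - xs‖ ^ 2 < 1 / (2 * c) * (2 * c * ε) :=
    mul_lt_mul_of_pos_left hAn (by positivity)
  have h6 : 1 / (2 * c) * (2 * c * ε) = ε := by field_simp
  linarith
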